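/- arXiv:2409.18617 — 3 statements merged into one kernel-verified Lean document; each statement's English description precedes it below -/
import Mathlib

section
/- Let b_1, ..., b_m be real numbers (m ≥ 2) with b_1 + ... + b_m = 0. Then -((m-2)/√(m(m-1))) (Σ b_i²)^{3/2} ≤ Σ b_i³ ≤ ((m-2)/√(m(m-1))) (Σ b_i²)^{3/2}. -/
open Finset

lemma okumura_aux (m : ℕ) (hm : 2 ≤ m) (b : Fin m → ℝ)
    (hsum : ∑ i, b i = 0) :
    ∑ i, (b i) ^ 3
      ≤ ((m - 2) / Real.sqrt (m * (m - 1))) * Real.sqrt (∑ i, (b i) ^ 2) ^ 3 := by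
  have hm2 : (2 : ℝ) ≤ (m : ℝ) := by exact_mod_cast hm
  set S := ∑ i, (b i) ^ 2 with hSdef
  have hS : 0 ≤ S := Finset.sum_nonneg fun i _ => sq_nonneg _
  set σ := Real.sqrt S with hσdef
  have hσ : 0 ≤ σ := Real.sqrt_nonneg _
  have hσ2 : σ ^ 2 = S := Real.sq_sqrt hS
  set D := Real.sqrt ((m : ℝ) * ((m : ℝ) - 1)) with hDdef
  have hDpos : 0 < D := Real.sqrt_pos.mpr (by nlinarith)
  have hD2 : D ^ 2 = (m : ℝ) * ((m : ℝ) - 1) := Real.sq_sqrt (by nlinarith)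
  set r : ℝ := -σ / D with hrdef
  set s : ℝ := σ * ((m : ℝ) - 1) / D with hsdef
  have hs0 : 0 ≤ s := by
    apply div_nonneg _ hDpos.le
    nlinarith
  -- pointwise bound b i ^ 2 ≤ (m-1)/m * S
  have hb2 : ∀ i, (m : ℝ) * (b i) ^ 2 ≤ ((m : ℝ) - 1) * S := by
    intro i
    have he : b i + ∑ j ∈ univ.erase i, b j = 0 := by
      rw [Finset.add_sum_erase _ _ (mem_univ i)]; exact hsum
    have he2 : (b i) ^ 2 + ∑ j ∈ univ.erase i, (b j) ^ 2 = S := by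
      rw [hSdef]; exact Finset.add_sum_erase _ (fun j => (b j) ^ 2) (mem_univ i)
    have hcard : ((univ.erase i).card : ℝ) = (m : ℝ) - 1 := by
      rw [Finset.card_erase_of_mem (mem_univ i)]
      simp only [card_univ, Fintype.card_fin]
      rw [Nat.cast_sub (by omega)]
      simp
    have hcs := sq_sum_le_card_mul_sum_sq (s := univ.erase i) (f := b)
    have hbi : b i = -(∑ j ∈ univ.erase i, b j) := by linarith
    rw [hcard] at hcs
    have : (b i) ^ 2 ≤ ((m : ℝ) - 1) * (S - (b i) ^ 2) := by
      calc (b i) ^ 2 = (∑ j ∈ univ.erase i, b j) ^ 2 := by rw [hbi]; ring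
        _ ≤ ((m : ℝ) - 1) * ∑ j ∈ univ.erase i, (b j) ^ 2 := hcs
        _ = ((m : ℝ) - 1) * (S - (b i) ^ 2) := by rw [← he2]; ring
    nlinarith
  -- hence b i ≤ s
  have hbs : ∀ i, b i ≤ s := by
    intro i
    have h1 := hb2 i
    have hs2 : (m : ℝ) * s ^ 2 = ((m : ℝ) - 1) * S := by
      rw [hsdef]
      field_simp
      linear_combination ((m : ℝ) * ((m:ℝ)-1)^2) * hσ2 - ((m:ℝ)-1) * S * hD2
    have hbb : b i ^ 2 ≤ s ^ 2 := by nlinarith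
    nlinarith [hbb, hs0]
  -- the key pointwise cubic inequality
  have hcube : ∀ i, (b i) ^ 3 - (2*r+s) * (b i) ^ 2 + (r^2+2*r*s) * (b i) - r^2*s ≤ 0 := by
    intro i
    have : (b i - r) ^ 2 * (b i - s) ≤ 0 :=
      mul_nonpos_of_nonneg_of_nonpos (sq_nonneg _) (by linarith [hbs i])
    nlinarith [this]
  have hsum3 : ∑ i, ((b i) ^ 3 - (2*r+s) * (b i) ^ 2 + (r^2+2*r*s) * (b i) - r^2*s)
      = (∑ i, (b i) ^ 3) - (2*r+s) * S + (r^2+2*r*s) * 0 - (m : ℝ) * (r^2*s) := by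
    rw [Finset.sum_sub_distrib, Finset.sum_add_distrib, Finset.sum_sub_distrib,
      ← Finset.mul_sum, ← Finset.mul_sum, ← hsum, Finset.sum_const, card_univ,
      Fintype.card_fin, nsmul_eq_mul]
  have hle : (∑ i, (b i) ^ 3) ≤ (2*r+s) * S + (m : ℝ) * (r^2*s) := by
    have := Finset.sum_nonpos (s := Finset.univ) (fun i _ => hcube i)
    rw [hsum3] at this
    linarith
  have hfinal : (2*r+s) * S + (m : ℝ) * (r^2*s)
      = ((m : ℝ) - 2) / D * σ ^ 3 := by
    rw [hrdef, hsdef, ← hσ2]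
    field_simp
    linear_combination (-(σ^3)) * hD2
  calc (∑ i, (b i) ^ 3) ≤ (2*r+s) * S + (m : ℝ) * (r^2*s) := hle
    _ = ((m : ℝ) - 2) / D * σ ^ 3 := hfinal

theorem okumura_inequality (m : ℕ) (hm : 2 ≤ m) (b : Fin m → ℝ)
    (hsum : ∑ i, b i = 0) :
    -((m - 2) / Real.sqrt (m * (m - 1))) * (∑ i, (b i) ^ 2) ^ ((3 : ℝ) / 2)
      ≤ ∑ i, (b i) ^ 3 ∧
    ∑ i, (b i) ^ 3
      ≤ ((m - 2) / Real.sqrt (m * (m - 1))) * (∑ i, (b i) ^ 2) ^ ((3 : ℝ) / 2) := by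
  have hS : 0 ≤ ∑ i, (b i) ^ 2 := Finset.sum_nonneg fun i _ => sq_nonneg _
  have hpow : (∑ i, (b i) ^ 2) ^ ((3 : ℝ) / 2) = Real.sqrt (∑ i, (b i) ^ 2) ^ 3 := by
    rw [Real.sqrt_eq_rpow, ← Real.rpow_natCast (_ ^ ((1:ℝ)/2)) 3, ← Real.rpow_mul hS]
    norm_num
  have h1 := okumura_aux m hm b hsum
  have h2 := okumura_aux m hm (fun i => -b i)
    (by rw [Finset.sum_neg_distrib, hsum, neg_zero])
  have e1 : ∑ i, ((fun i => -b i) i) ^ 2 = ∑ i, (b i) ^ 2 := by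
    simp [neg_sq]
  have e2 : ∑ i, ((fun i => -b i) i) ^ 3 = -∑ i, (b i) ^ 3 := by
    rw [← Finset.sum_neg_distrib]
    exact Finset.sum_congr rfl fun i _ => by ring
  rw [e1, e2] at h2
  constructor
  · rw [hpow]; linarith
  · rw [hpow]; exact h1
end

section
/- Let b_1, ..., b_m be real numbers (m ≥ 2) with Σ b_i = 0. If Σ b_i³ = ((m-2)/√(m(m-1))) (Σ b_i²)^{3/2}, then m−1 of the b_i's are non-positive and all equal to each other. -/
open Finset

theorem okumura_equality_case (m : ℕ) (hm : 2 ≤ m) (b : Fin m → ℝ)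
    (hsum : ∑ i, b i = 0)
    (heq : ∑ i, (b i) ^ 3
      = ((m - 2) / Real.sqrt (m * (m - 1))) * (∑ i, (b i) ^ 2) ^ ((3 : ℝ) / 2)) :
    ∃ i : Fin m, (∀ j, j ≠ i → b j ≤ 0) ∧ (∀ j k, j ≠ i → k ≠ i → b j = b k) := by
  classical
  have hm' : (2:ℝ) ≤ (m:ℝ) := by exact_mod_cast hm
  have hmm : (0:ℝ) < (m:ℝ) * ((m:ℝ) - 1) := by nlinarith
  set S : ℝ := ∑ i, (b i) ^ 2 with hSdef
  have hS0 : 0 ≤ S := Finset.sum_nonneg fun i _ => sq_nonneg _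
  have hm0 : 0 < m := by omega
  rcases eq_or_lt_of_le hS0 with hS | hS
  · -- S = 0, all b i = 0
    have hall : ∀ i, b i = 0 := by
      intro i
      have := (Finset.sum_eq_zero_iff_of_nonneg (fun i _ => sq_nonneg (b i))).mp hS.symm i (mem_univ i)
      exact pow_eq_zero_iff (by norm_num) |>.mp this
    exact ⟨⟨0, hm0⟩, fun j _ => (hall j).le, fun j k _ _ => by rw [hall j, hall k]⟩
  · set y : ℝ := Real.sqrt (S / ((m:ℝ) * ((m:ℝ) - 1))) with hydef
    have hy : 0 < y := Real.sqrt_pos.mpr (div_pos hS hmm)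
    have hy2 : y ^ 2 = S / ((m:ℝ) * ((m:ℝ) - 1)) := Real.sq_sqrt (div_pos hS hmm).le
    set x : ℝ := ((m:ℝ) - 1) * y with hxdef
    have hx : 0 < x := mul_pos (by linarith) hy
    -- rewrite heq
    have hsqrtmm : 0 < Real.sqrt ((m:ℝ) * ((m:ℝ) - 1)) := Real.sqrt_pos.mpr hmm
    have hypos : y = Real.sqrt S / Real.sqrt ((m:ℝ) * ((m:ℝ) - 1)) := by
      rw [hydef, Real.sqrt_div hS0]
    have hSrpow : S ^ ((3:ℝ)/2) = S * Real.sqrt S := by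
      rw [show ((3:ℝ)/2) = 1 + 1/2 by norm_num, Real.rpow_add hS, Real.rpow_one,
        ← Real.sqrt_eq_rpow]
    have heq' : ∑ i, (b i) ^ 3 = ((m:ℝ) - 2) * S * y := by
      rw [heq, hSrpow, hypos]
      field_simp
    -- each b i ≤ x
    have hx2 : x ^ 2 = ((m:ℝ) - 1) * S / (m:ℝ) := by
      rw [hxdef, mul_pow, hy2]
      field_simp
    have hbx : ∀ i, b i ≤ x := by
      intro i
      have he : ∑ j ∈ univ.erase i, b j = - b i := by
        rw [Finset.sum_erase_eq_sub (mem_univ i), hsum]; ring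
      have he2 : ∑ j ∈ univ.erase i, (b j) ^ 2 = S - (b i) ^ 2 := by
        rw [Finset.sum_erase_eq_sub (mem_univ i)]
      have hcs := sq_sum_le_card_mul_sum_sq (s := univ.erase i) (f := b)
      rw [he, he2, Finset.card_erase_of_mem (mem_univ i), Finset.card_univ,
        Fintype.card_fin] at hcs
      have hcast : ((m - 1 : ℕ) : ℝ) = (m:ℝ) - 1 := by
        have : 1 ≤ m := by omega
        push_cast [this]; ring
      rw [hcast] at hcs
      have hmpos : (0:ℝ) < m := by positivity
      have hb2 : (b i) ^ 2 ≤ x ^ 2 := by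
        rw [hx2, le_div_iff₀ hmpos]
        nlinarith [hcs, neg_sq (b i)]
      nlinarith [hb2, hx.le]
    -- key sum is zero
    have hxyy : (m:ℝ) * (x * y ^ 2) = y * S := by
      rw [hy2, hxdef]
      have hm1 : (m:ℝ) - 1 ≠ 0 := by linarith
      field_simp
    have key : ∑ i, (b i + y) ^ 2 * (x - b i) = 0 := by
      have expand : ∀ i : Fin m, (b i + y) ^ 2 * (x - b i)
          = -(b i ^ 3) + (x - 2*y) * (b i ^ 2) + (2*x*y - y^2) * (b i) + x * y^2 := by
        intro i; ring
      calc ∑ i, (b i + y) ^ 2 * (x - b i)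
          = ∑ i, (-(b i ^ 3) + (x - 2*y) * (b i ^ 2) + (2*x*y - y^2) * (b i) + x * y^2) :=
            Finset.sum_congr rfl fun i _ => expand i
        _ = -(∑ i, b i ^ 3) + (x - 2*y) * S + (2*x*y - y^2) * (∑ i, b i)
              + (m:ℝ) * (x * y^2) := by
            simp [Finset.sum_add_distrib, ← Finset.mul_sum, Finset.sum_neg_distrib,
              Finset.sum_const, Finset.card_univ, Fintype.card_fin, hSdef, mul_comm, Finset.sum_mul]
        _ = 0 := by rw [heq', hsum, hxyy]; ring
    have hnn : ∀ i ∈ (univ : Finset (Fin m)), 0 ≤ (b i + y) ^ 2 * (x - b i) :=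
      fun i _ => mul_nonneg (sq_nonneg _) (sub_nonneg.mpr (hbx i))
    have hzero : ∀ i : Fin m, (b i + y) ^ 2 * (x - b i) = 0 :=
      fun i => (Finset.sum_eq_zero_iff_of_nonneg hnn).mp key i (mem_univ i)
    have hval : ∀ i, b i = x ∨ b i = -y := by
      intro i
      rcases mul_eq_zero.mp (hzero i) with h | h
      · right; have := pow_eq_zero_iff (n := 2) (by norm_num) |>.mp h; linarith
      · left; linarith
    -- counting
    set T : Finset (Fin m) := univ.filter (fun i => b i = x) with hTdef
    have hcardsum : T.card + (univ.filter (fun i => ¬ b i = x)).card = m := by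
      rw [hTdef, Finset.card_filter_add_card_filter_not, Finset.card_univ,
        Fintype.card_fin]
    have hsplit : ∑ i ∈ T, b i + ∑ i ∈ univ.filter (fun i => ¬ b i = x), b i = 0 := by
      rw [hTdef, Finset.sum_filter_add_sum_filter_not]; exact hsum
    have hTsum : ∑ i ∈ T, b i = (T.card : ℝ) * x := by
      rw [Finset.sum_congr rfl (fun i hi => (Finset.mem_filter.mp hi).2),
        Finset.sum_const, nsmul_eq_mul]
    have hTcsum : ∑ i ∈ univ.filter (fun i => ¬ b i = x), b i
        = ((univ.filter (fun i => ¬ b i = x)).card : ℝ) * (-y) := by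
      rw [Finset.sum_congr rfl (fun i hi => ((hval i).resolve_left (Finset.mem_filter.mp hi).2)),
        Finset.sum_const, nsmul_eq_mul]
    have hk : T.card = 1 := by
      have h1 : T.card ≤ m := by omega
      have h2 : (univ.filter (fun i => ¬ b i = x)).card = m - T.card := by omega
      have hc2 : ((univ.filter (fun i => ¬ b i = x)).card : ℝ) = (m:ℝ) - (T.card:ℝ) := by
        rw [h2, Nat.cast_sub h1]
      rw [hTsum, hTcsum, hc2, hxdef] at hsplit
      have hmR : (0:ℝ) < (m:ℝ) := by positivity
      have h0 : ((T.card:ℝ) - 1) * ((m:ℝ) * y) = 0 := by linear_combination hsplit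
      have : ((T.card : ℝ)) = 1 := by
        rcases mul_eq_zero.mp h0 with h | h
        · linarith
        · exact absurd h (mul_ne_zero hmR.ne' hy.ne')
      exact_mod_cast this
    obtain ⟨i, hi⟩ := Finset.card_eq_one.mp hk
    have hbj : ∀ j, j ≠ i → b j = -y := by
      intro j hj
      have : j ∉ T := by rw [hi]; simpa using hj
      have : ¬ b j = x := by
        intro h; exact this (Finset.mem_filter.mpr ⟨mem_univ j, h⟩)
      exact (hval j).resolve_left this
    exact ⟨i, fun j hj => by rw [hbj j hj]; linarith,
      fun j k hj hk' => by rw [hbj j hj, hbj k hk']⟩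
end

section
/- Let m ≥ 2, c ∈ ℝ, λ_1, ..., λ_m ∈ ℝ, f = (1/m) Σ λ_i, a = Σ λ_i². Then −(1/2) Σ_{i,j} (λ_i − λ_j)² (c + λ_i λ_j) ≤ (a − m f²) (a − m c − 2 m f² + (m(m−2)/√(m(m−1))) |f| √(a − m f²)). -/
open Finset
set_option maxRecDepth 4000

lemma okumura (m : ℕ) (hm : 2 ≤ m) (μ : Fin m → ℝ) (h0 : ∑ i, μ i = 0) :
    ∑ i, (μ i) ^ 3 ≤ ((m : ℝ) - 2) / Real.sqrt (m * (m - 1)) *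
      ((∑ i, (μ i) ^ 2) * Real.sqrt (∑ i, (μ i) ^ 2)) := by
  have hm2 : (2:ℝ) ≤ m := by exact_mod_cast hm
  have hmm : (0:ℝ) < (m:ℝ) * ((m:ℝ) - 1) := by nlinarith
  set b : ℝ := ∑ i, (μ i) ^ 2 with hb
  have hb0 : 0 ≤ b := Finset.sum_nonneg fun i _ => sq_nonneg _
  set t : ℝ := Real.sqrt (b / ((m:ℝ) * ((m:ℝ) - 1))) with hT
  have ht0 : 0 ≤ t := Real.sqrt_nonneg _
  have ht2 : (m:ℝ) * ((m:ℝ) - 1) * t ^ 2 = b := by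
    rw [hT, Real.sq_sqrt (by positivity)]; field_simp
    exact mul_div_cancel_left₀ b (ne_of_gt (by linarith) : (m:ℝ) - 1 ≠ 0)
  have hub : ∀ i, μ i ≤ ((m:ℝ) - 1) * t := by
    intro i
    have h1 : (∑ j ∈ univ.erase i, μ j) = -(μ i) := by
      rw [Finset.sum_erase_eq_sub (mem_univ i), h0]; ring
    have h2 : (∑ j ∈ univ.erase i, μ j) ^ 2 ≤ #(univ.erase i) * ∑ j ∈ univ.erase i, (μ j) ^ 2 :=
      sq_sum_le_card_mul_sum_sq
    have h3 : (∑ j ∈ univ.erase i, (μ j) ^ 2) = b - (μ i) ^ 2 := by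
      rw [Finset.sum_erase_eq_sub (mem_univ i)]
    have h4 : (#(univ.erase i) : ℝ) = (m:ℝ) - 1 := by
      rw [Finset.card_erase_of_mem (mem_univ i), card_univ, Fintype.card_fin]
      rw [Nat.cast_sub (by omega)]; norm_num
    rw [h1, h3, h4] at h2
    have h5 : (μ i)^2 ≤ (((m:ℝ)-1)*t)^2 := by nlinarith
    have h6 : |μ i| ≤ ((m:ℝ)-1)*t := by
      have := Real.sqrt_le_sqrt h5
      rwa [Real.sqrt_sq_eq_abs, Real.sqrt_sq (by nlinarith)] at this
    exact (abs_le.mp h6).2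
  have hpt : ∀ i, (μ i)^3 ≤ ((m:ℝ)-3)*t*(μ i)^2 + (2*(m:ℝ)-3)*t^2*(μ i) + ((m:ℝ)-1)*t^3 := by
    intro i
    nlinarith [mul_nonneg (sq_nonneg (μ i + t)) (sub_nonneg.2 (hub i)), hub i]
  have hsum : ∑ i, (μ i)^3 ≤ ((m:ℝ)-2)*t*b := by
    calc ∑ i, (μ i)^3 ≤ ∑ i, (((m:ℝ)-3)*t*(μ i)^2 + (2*(m:ℝ)-3)*t^2*(μ i) + ((m:ℝ)-1)*t^3) :=
          Finset.sum_le_sum fun i _ => hpt i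
      _ = ((m:ℝ)-3)*t*b + (2*(m:ℝ)-3)*t^2*(∑ i, μ i) + m*(((m:ℝ)-1)*t^3) := by
          simp only [Finset.sum_add_distrib]
          rw [← Finset.mul_sum, ← Finset.mul_sum, ← hb, Finset.sum_const, card_univ,
            Fintype.card_fin, nsmul_eq_mul]
      _ = ((m:ℝ)-2)*t*b := by rw [h0]; nlinarith [ht2]
  refine hsum.trans (le_of_eq ?_)
  have hts : t = Real.sqrt b / Real.sqrt ((m:ℝ)*((m:ℝ)-1)) := by
    rw [hT, Real.sqrt_div hb0]
  rw [hts]; field_simp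

lemma okumura_abs (m : ℕ) (hm : 2 ≤ m) (μ : Fin m → ℝ) (h0 : ∑ i, μ i = 0) :
    |∑ i, (μ i) ^ 3| ≤ ((m : ℝ) - 2) / Real.sqrt (m * (m - 1)) *
      ((∑ i, (μ i) ^ 2) * Real.sqrt (∑ i, (μ i) ^ 2)) := by
  have h1 := okumura m hm μ h0
  have h2 := okumura m hm (fun i => -(μ i)) (by simpa using h0)
  have e3 : ∑ i, (-(μ i))^3 = -(∑ i, (μ i)^3) := by
    rw [← Finset.sum_neg_distrib]
    exact Finset.sum_congr rfl fun i _ => Odd.neg_pow ⟨1, by norm_num⟩ _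
  have e2 : ∑ i, (-(μ i))^2 = ∑ i, (μ i)^2 := Finset.sum_congr rfl fun i _ => neg_sq _
  simp only [e3, e2] at h2
  exact abs_le.mpr ⟨by linarith [h2], h1⟩

theorem okumura_gauss_estimate (m : ℕ) (hm : 2 ≤ m) (c : ℝ) (L : Fin m → ℝ)
    (f a : ℝ) (hf : f = (1 / m) * ∑ i, L i) (ha : a = ∑ i, (L i) ^ 2) :
    -(1 / 2) * ∑ i, ∑ j, (L i - L j) ^ 2 * (c + L i * L j)
      ≤ (a - m * f ^ 2) * (a - m * c - 2 * m * f ^ 2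
          + (m * (m - 2) / Real.sqrt (m * (m - 1))) * |f| * Real.sqrt (a - m * f ^ 2)) := by
  have hm2 : (2:ℝ) ≤ m := by exact_mod_cast hm
  have hm0 : (m:ℝ) ≠ 0 := by positivity
  have hS1 : ∑ i, L i = m * f := by rw [hf]; field_simp
  have key : ∑ i, ∑ j, (L i - L j) ^ 2 * (c + L i * L j)
      = 2*c*((m:ℝ)*a - ((m:ℝ)*f)^2) + 2*((m:ℝ)*f)*(∑ i, (L i)^3) - 2*a^2 := by
    have inner : ∀ i, (∑ j, (L i - L j) ^ 2 * (c + L i * L j))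
        = ((m:ℝ)*c)*((L i)^2) + (-2*c*((m:ℝ)*f))*(L i) + c*a + ((m:ℝ)*f)*((L i)^3)
          + (-2*a)*((L i)^2) + (∑ j, (L j)^3)*(L i) := by
      intro i
      have e : ∀ j, (L i - L j) ^ 2 * (c + L i * L j)
          = c*(L i)^2 + (-2*c*(L i))*(L j) + c*((L j)^2) + ((L i)^3)*(L j)
            + (-2*(L i)^2)*((L j)^2) + (L i)*((L j)^3) := fun j => by ring
      simp only [e, Finset.sum_add_distrib, ← Finset.mul_sum, Finset.sum_const, card_univ,
        Fintype.card_fin, nsmul_eq_mul, ← ha, hS1]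
      ring
    simp only [inner, Finset.sum_add_distrib, ← Finset.mul_sum, Finset.sum_const, card_univ,
      Fintype.card_fin, nsmul_eq_mul, ← ha, hS1]
    ring
  set μ : Fin m → ℝ := fun i => L i - f with hμ
  have hmu0 : ∑ i, μ i = 0 := by
    simp only [hμ, Finset.sum_sub_distrib, hS1, Finset.sum_const, card_univ,
      Fintype.card_fin, nsmul_eq_mul]
    ring
  have hbs : ∑ i, (μ i)^2 = a - m * f ^ 2 := by
    have e : ∀ i, (μ i)^2 = (L i)^2 + (-2*f)*(L i) + f^2 := fun i => by simp only [hμ]; ring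
    simp only [e, Finset.sum_add_distrib, ← Finset.mul_sum, Finset.sum_const, card_univ,
      Fintype.card_fin, nsmul_eq_mul, ← ha, hS1]
    ring
  have hb0 : 0 ≤ a - m * f ^ 2 := by rw [← hbs]; exact Finset.sum_nonneg fun i _ => sq_nonneg _
  have hS3 : ∑ i, (L i)^3 = (∑ i, (μ i)^3) + 3*f*a - 2*m*f^3 := by
    have e : ∀ i, (μ i)^3 = (L i)^3 + (-3*f)*((L i)^2) + (3*f^2)*(L i) + (-(f^3)) :=
      fun i => by simp only [hμ]; ring
    simp only [e, Finset.sum_add_distrib, ← Finset.mul_sum, Finset.sum_const, card_univ,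
      Fintype.card_fin, nsmul_eq_mul, ← ha, hS1]
    ring
  set X : ℝ := ∑ i, (μ i)^3 with hX
  set C : ℝ := ((m:ℝ) - 2) / Real.sqrt ((m:ℝ) * ((m:ℝ) - 1)) with hC
  set sb : ℝ := Real.sqrt (a - m * f ^ 2) with hsb
  have habs : |X| ≤ C * ((a - m*f^2) * sb) := by
    have := okumura_abs m hm μ hmu0
    rwa [hbs] at this
  have hfm : -(f * X) ≤ |f| * (C * ((a - m*f^2) * sb)) := by
    calc -(f * X) ≤ |f * X| := neg_le_abs _
      _ = |f| * |X| := abs_mul f X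
      _ ≤ |f| * (C * ((a - m*f^2) * sb)) := mul_le_mul_of_nonneg_left habs (abs_nonneg f)
  have hfin : -((m:ℝ) * (f * X)) ≤ (m:ℝ) * (|f| * (C * ((a - m*f^2) * sb))) := by
    calc -((m:ℝ) * (f * X)) = (m:ℝ) * (-(f * X)) := by ring
      _ ≤ _ := mul_le_mul_of_nonneg_left hfm (by linarith)
  rw [key, hS3]
  have hK : (m:ℝ) * ((m:ℝ) - 2) / Real.sqrt ((m:ℝ) * ((m:ℝ) - 1)) = (m:ℝ) * C := by
    rw [hC]; ring
  rw [hK]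
  nlinarith [hfin]
end
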